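/- Let H be a real Hilbert space, let J ≥ 1, and let S₀ ⊆ S₁ ⊆ ⋯ ⊆ S_J = H be a nested chain of closed (complete) linear subspaces, with P_j : H → H the orthogonal projection onto S_j. For j = 0, …, J let I_j : H → H be linear maps with range(I_j) ⊆ S_j and I_j u = u for all u ∈ S_j, and assume I_J = id. Then in the limiting case where the approximate projections are exact, the wavelet-modified operator collapses to the exact orthogonal projection: for every 0 ≤ k ≤ J−1, ∏_{j=k}^{J−1} ( I_j + P_j ∘ (I_{j+1} − I_j) ) = P_k, where the factor with j = k is applied last (leftmost). -/

import Mathlib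

/-- The ordered product `F_k ∘ F_{k+1} ∘ ⋯ ∘ F_{J-1}` of a family of linear
endomorphisms (the factor with index `k` applied last, i.e. leftmost); for
`k ≥ J` it is the identity. -/
def whbProd {K V : Type*} [Field K] [AddCommGroup V] [Module K V]
    (F : ℕ → (V →ₗ[K] V)) (J k : ℕ) : V →ₗ[K] V :=
  (((List.range (J - k)).map fun i => F (k + i)).prod : Module.End K V)

/-- In a real Hilbert space `H` with nested closed subspaces
`S₀ ⊆ ⋯ ⊆ S_J = H`, orthogonal projections `P_j : H → H` onto `S_j`
(characterized by `P_j u ∈ S_j` and `u − P_j u ⟂ S_j`), and linear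
interpolation projections `I_j` onto `S_j` with `I_J = id`, the
wavelet-modified operator with exact projections collapses to the orthogonal
projection: `∏_{j=k}^{J-1} (I_j + P_j ∘ (I_{j+1} − I_j)) = P_k` for `k < J`. -/
theorem whb_exact_projection_collapse
    {H : Type*} [NormedAddCommGroup H] [InnerProductSpace ℝ H] [CompleteSpace H]
    (J : ℕ) (hJ : 1 ≤ J)
    (S : ℕ → Submodule ℝ H)
    (hclosed : ∀ j, j ≤ J → IsClosed (S j : Set H))
    (hnest : ∀ j, j < J → S j ≤ S (j + 1))
    (hSJ : S J = ⊤)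
    (P : ℕ → (H →ₗ[ℝ] H))
    (hPmem : ∀ j, j ≤ J → ∀ u, P j u ∈ S j)
    (hPorth : ∀ j, j ≤ J → ∀ u, ∀ v ∈ S j, (inner ℝ (u - P j u) v : ℝ) = 0)
    (I : ℕ → (H →ₗ[ℝ] H))
    (hIrange : ∀ j, j ≤ J → LinearMap.range (I j) ≤ S j)
    (hIfix : ∀ j, j ≤ J → ∀ u ∈ S j, I j u = u)
    (hIJ : I J = LinearMap.id)
    (k : ℕ) (hk : k < J) :
    whbProd (fun j => I j + P j * (I (j + 1) - I j)) J k = P k := by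

  -- P j fixes S j
  have hPfix : ∀ j, j ≤ J → ∀ u ∈ S j, P j u = u := by
    intro j hj u hu
    have h0 : (inner ℝ (u - P j u) (u - P j u) : ℝ) = 0 :=
      hPorth j hj u (u - P j u) (Submodule.sub_mem _ hu (hPmem j hj u))
    have h1 : u - P j u = 0 := inner_self_eq_zero.mp h0
    exact (sub_eq_zero.mp h1).symm
  have hPJ : P J = LinearMap.id := by
    ext u
    exact hPfix J le_rfl u (by simp [hSJ])
  -- P j (P (j+1) u) = P j u
  have hPP : ∀ j, j < J → ∀ u, P j (P (j+1) u) = P j u := by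
    intro j hj u
    set x := P (j+1) u with hx
    have hmem : P j x - P j u ∈ S j := Submodule.sub_mem _ (hPmem j hj.le x) (hPmem j hj.le u)
    have h1 := hPorth j hj.le x (P j x - P j u) hmem
    have h2 := hPorth j hj.le u (P j x - P j u) hmem
    have h3 := hPorth (j+1) hj u (P j x - P j u) (hnest j hj hmem)
    have h4 : (inner ℝ (P j x - P j u) (P j x - P j u) : ℝ) = 0 := by
      have : (inner ℝ ((u - P j u) - (u - x) - (x - P j x)) (P j x - P j u) : ℝ) = 0 := by
        rw [inner_sub_left, inner_sub_left, h1, h2, h3]; ring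
      have heq : (u - P j u) - (u - x) - (x - P j x) = P j x - P j u := by abel
      rwa [heq] at this
    have h5 : P j x - P j u = 0 := inner_self_eq_zero.mp h4
    exact sub_eq_zero.mp h5
  -- the composition step
  have hFcomp : ∀ j, j < J →
      ((I j + P j * (I (j+1) - I j)) * P (j+1)) = P j := by
    intro j hj
    ext u
    have hxmem : P (j+1) u ∈ S (j+1) := hPmem (j+1) hj u
    have hI1x : I (j+1) (P (j+1) u) = P (j+1) u := hIfix (j+1) hj _ hxmem
    have hPIj : P j (I j (P (j+1) u)) = I j (P (j+1) u) :=
      hPfix j hj.le _ (hIrange j hj.le ⟨P (j+1) u, rfl⟩)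
    simp only [Module.End.mul_apply, LinearMap.add_apply, LinearMap.sub_apply, map_sub,
      hI1x, hPIj, hPP j hj u]
    abel
  have key : ∀ n k, k + n = J →
      whbProd (fun j => I j + P j * (I (j + 1) - I j)) J k = P k := by
    intro n
    induction n with
    | zero =>
      intro k hkJ
      have : k = J := by omega
      subst this
      simp [whbProd, hPJ]
      rfl
    | succ n ih =>
      intro k hkJ
      have hkJ' : k < J := by omega
      have hsub : J - k = n + 1 := by omega
      have hsub' : J - (k + 1) = n := by omega
      have hstep : whbProd (fun j => I j + P j * (I (j + 1) - I j)) J k =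
          (I k + P k * (I (k+1) - I k)) * whbProd (fun j => I j + P j * (I (j + 1) - I j)) J (k+1) := by
        unfold whbProd
        rw [hsub, hsub', List.range_succ_eq_map]
        simp only [List.map_cons, List.prod_cons, List.map_map, Function.comp_def, Nat.add_zero]
        refine congrArg _ (congrArg _ (List.map_congr_left fun x _ => ?_))
        have hx : k + x.succ = k + 1 + x := by omega
        rw [hx]
      rw [hstep, ih (k+1) (by omega), hFcomp k hkJ']
  exact key (J - k) k (by omega)
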